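/- With G₁ = diag(-1, A^{-4}) and G₂ = [[1/(A⁴(1+A⁴)), -(A⁴+A^{-4}+1)/(A²(A⁴+A^{-4}+2))], [-A^{-2}, -1/(1+A^{-4})]] as 2×2 complex matrices (A ∈ C* with all indicated denominators nonzero), each G_i satisfies the Hecke quadratic relation G_i² = (q-1)G_i + q with q = A^{-4}. -/
import Mathlib


/-- The matrix `G₁` of the representation `(-A⁻¹)ρ` of `B₃` on `V(3,1)`. -/
noncomputable def G₁ (A : ℂ) : Matrix (Fin 2) (Fin 2) ℂ :=
  !![-1, 0; 0, A ^ (-4 : ℤ)]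

/-- The matrix `G₂` of the representation `(-A⁻¹)ρ` of `B₃` on `V(3,1)`. -/
noncomputable def G₂ (A : ℂ) : Matrix (Fin 2) (Fin 2) ℂ :=
  !![1 / (A ^ 4 * (1 + A ^ 4)), -(A ^ 4 + A ^ (-4 : ℤ) + 1) / (A ^ 2 * (A ^ 4 + A ^ (-4 : ℤ) + 2));
     -A ^ (-2 : ℤ), -1 / (1 + A ^ (-4 : ℤ))]

/-- each Gᵢ satisfies the Hecke quadratic relation with q = A^{-4}. -/
theorem hecke_quadratic_V31 (A : ℂ) (hA0 : A ≠ 0)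
    (h1 : A ^ 4 * (1 + A ^ 4) ≠ 0)
    (h2 : A ^ 2 * (A ^ 4 + A ^ (-4 : ℤ) + 2) ≠ 0)
    (h3 : 1 + A ^ (-4 : ℤ) ≠ 0) :
    G₁ A * G₁ A = (A ^ (-4 : ℤ) - 1) • G₁ A + A ^ (-4 : ℤ) • (1 : Matrix (Fin 2) (Fin 2) ℂ) ∧
    G₂ A * G₂ A = (A ^ (-4 : ℤ) - 1) • G₂ A + A ^ (-4 : ℤ) • (1 : Matrix (Fin 2) (Fin 2) ℂ) := by
  have e4 : A ^ (-4 : ℤ) = (A ^ 4)⁻¹ := by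
    rw [zpow_neg, ← zpow_natCast]; norm_num
  have e2 : A ^ (-2 : ℤ) = (A ^ 2)⁻¹ := by
    rw [zpow_neg, ← zpow_natCast]; norm_num
  have h14 : (1 : ℂ) + A ^ 4 ≠ 0 := fun h => h1 (by rw [h, mul_zero])
  have hsum : A ^ 4 + (A ^ 4)⁻¹ + 2 = (1 + A ^ 4) ^ 2 / A ^ 4 := by
    field_simp; ring
  have h3' : (1 : ℂ) + (A ^ 4)⁻¹ = (1 + A ^ 4) / A ^ 4 := by
    field_simp; ring
  constructor <;>
  · ext i j
    fin_cases i <;> fin_cases j <;>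
      simp [G₁, G₂, e4, e2, hsum, h3', Matrix.mul_apply, Fin.sum_univ_succ,
        Matrix.one_apply, div_div_eq_mul_div] <;>
      field_simp [hA0, h14] <;> ring
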